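/- Suppose f : ℝⁿ → ℝⁿ is Lipschitz continuous with constant L and x, y are two C¹ solutions of the Caputo initial value problem D_*^q x = f(x), x(0) = x₀, on [0,T] with q ∈ (0,1), in the sense of the equivalent Volterra integral equation x(t) = x₀ + (1/Γ(q)) ∫₀ᵗ (t−s)^{q−1} f(x(s)) ds. Then x = y on [0,T]. -/

import Mathlib

open Set MeasureTheory

private lemma aux_kernel_integrable {q : ℝ} (h : -1 < q - 1) (t : ℝ) :
    IntervalIntegrable (fun s => (t - s) ^ (q-1)) volume 0 t := by
  have := ((intervalIntegral.intervalIntegrable_rpow' (a := 0) (b := t) h).comp_sub_left t).symm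
  simpa using this

private lemma aux_smul_integrable {E : Type*} [NormedAddCommGroup E] [NormedSpace ℝ E]
    [SecondCountableTopology E] {k : ℝ → ℝ} {g : ℝ → E} {a b : ℝ} (hab : a ≤ b)
    (hk : IntervalIntegrable k volume a b) (hg : ContinuousOn g (Icc a b)) :
    IntervalIntegrable (fun s => k s • g s) volume a b := by
  rw [intervalIntegrable_iff_integrableOn_Ioc_of_le hab] at hk ⊢
  rw [← integrableOn_Icc_iff_integrableOn_Ioc] at hk ⊢
  exact hk.smul_continuousOn hg isCompact_Icc

set_option maxHeartbeats 2000000 in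
theorem caputo_ivp_unique (n : ℕ) (q T : ℝ) (hq0 : 0 < q) (hq1 : q < 1) (hT : 0 < T)
    (f : EuclideanSpace ℝ (Fin n) → EuclideanSpace ℝ (Fin n)) (L : NNReal)
    (hf : LipschitzWith L f)
    (x y : ℝ → EuclideanSpace ℝ (Fin n)) (x₀ : EuclideanSpace ℝ (Fin n))
    (hxc : ContinuousOn x (Icc 0 T)) (hyc : ContinuousOn y (Icc 0 T))
    (hx : ∀ t ∈ Icc (0 : ℝ) T,
      x t = x₀ + (1 / Real.Gamma q) • ∫ s in (0 : ℝ)..t, ((t - s) ^ (q - 1)) • f (x s))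
    (hy : ∀ t ∈ Icc (0 : ℝ) T,
      y t = x₀ + (1 / Real.Gamma q) • ∫ s in (0 : ℝ)..t, ((t - s) ^ (q - 1)) • f (y s)) :
    ∀ t ∈ Icc (0 : ℝ) T, x t = y t := by
  have hΓ : 0 < Real.Gamma q := Real.Gamma_pos_of_pos hq0
  have hqm1 : (-1 : ℝ) < q - 1 := by linarith
  set Γ := Real.Gamma q with hΓdef
  -- choose the step size δ
  set r : ℝ := (Γ * q) / (2 * ((L : ℝ) + 1)) with hrdef
  have hL1 : (0:ℝ) < (L:ℝ) + 1 := by positivity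
  have hr : 0 < r := by positivity
  set δ : ℝ := r ^ (1/q : ℝ) with hδdef
  have hδ : 0 < δ := Real.rpow_pos_of_pos hr _
  have hδq : δ ^ q = r := by
    rw [hδdef, ← Real.rpow_mul hr.le, one_div, inv_mul_cancel₀ hq0.ne', Real.rpow_one]
  have hLδ : (L : ℝ) * δ ^ q ≤ Γ * q / 2 := by
    rw [hδq, hrdef, mul_div_assoc']
    rw [div_le_div_iff₀ (by positivity) (by norm_num : (0:ℝ) < 2)]
    nlinarith [mul_pos hΓ hq0, L.coe_nonneg]
  -- x 0 = y 0
  have h0T : (0:ℝ) ∈ Icc (0:ℝ) T := ⟨le_refl _, hT.le⟩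
  have hx0 : x 0 = y 0 := by
    rw [hx 0 h0T, hy 0 h0T, intervalIntegral.integral_same, intervalIntegral.integral_same]
  -- the key step lemma
  have step : ∀ a ∈ Icc (0:ℝ) T, (∀ s ∈ Icc (0:ℝ) a, x s = y s) →
      ∀ t ∈ Icc (0:ℝ) (min T (a + δ)), x t = y t := by
    rintro a ⟨ha0, haT⟩ heq
    set b := min T (a + δ) with hbdef
    have hab : a ≤ b := le_min haT (by linarith)
    have hbT : b ≤ T := min_le_left _ _
    have hba : b - a ≤ δ := by
      have := min_le_right T (a + δ); linarith
    -- continuity of the difference norm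
    have hgc : ContinuousOn (fun t => ‖x t - y t‖) (Icc a b) := by
      apply ContinuousOn.norm
      exact (hxc.mono (Icc_subset_Icc ha0 hbT)).sub (hyc.mono (Icc_subset_Icc ha0 hbT))
    obtain ⟨t₀, ht₀, hmax⟩ := isCompact_Icc.exists_isMaxOn (nonempty_Icc.2 hab) hgc
    set M : ℝ := ‖x t₀ - y t₀‖ with hMdef
    have hM0 : 0 ≤ M := norm_nonneg _
    -- key estimate
    have key : ∀ t ∈ Icc a b, ‖x t - y t‖ ≤ M / 2 := by
      rintro t ⟨hat, htb⟩
      have ht0 : 0 ≤ t := le_trans ha0 hat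
      have htT : t ≤ T := le_trans htb hbT
      have htIcc : t ∈ Icc (0:ℝ) T := ⟨ht0, htT⟩
      -- integrability
      have hK : IntervalIntegrable (fun s => (t - s) ^ (q-1)) volume 0 t :=
        aux_kernel_integrable hqm1 t
      have hKat : IntervalIntegrable (fun s => (t - s) ^ (q-1)) volume a t :=
        hK.mono_set (by rw [uIcc_of_le hat, uIcc_of_le ht0]; exact Icc_subset_Icc ha0 le_rfl)
      have hK0a : IntervalIntegrable (fun s => (t - s) ^ (q-1)) volume 0 a :=
        hK.mono_set (by rw [uIcc_of_le ha0, uIcc_of_le ht0]; exact Icc_subset_Icc le_rfl hat)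
      have hfx : ContinuousOn (fun s => f (x s)) (Icc 0 t) :=
        hf.continuous.comp_continuousOn (hxc.mono (Icc_subset_Icc le_rfl htT))
      have hfy : ContinuousOn (fun s => f (y s)) (Icc 0 t) :=
        hf.continuous.comp_continuousOn (hyc.mono (Icc_subset_Icc le_rfl htT))
      have hIx : IntervalIntegrable (fun s => ((t - s) ^ (q-1)) • f (x s)) volume 0 t :=
        aux_smul_integrable ht0 hK hfx
      have hIy : IntervalIntegrable (fun s => ((t - s) ^ (q-1)) • f (y s)) volume 0 t :=
        aux_smul_integrable ht0 hK hfy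
      -- the difference formula
      have hdiff : x t - y t
          = (1 / Γ) • ∫ s in a..t, ((t - s) ^ (q-1)) • (f (x s) - f (y s)) := by
        rw [hx t htIcc, hy t htIcc]
        have : x₀ + (1/Γ) • (∫ s in (0:ℝ)..t, ((t - s) ^ (q-1)) • f (x s))
            - (x₀ + (1/Γ) • (∫ s in (0:ℝ)..t, ((t - s) ^ (q-1)) • f (y s)))
            = (1/Γ) • ((∫ s in (0:ℝ)..t, ((t - s) ^ (q-1)) • f (x s))
              - ∫ s in (0:ℝ)..t, ((t - s) ^ (q-1)) • f (y s)) := by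
          rw [smul_sub, add_sub_add_left_eq_sub]
        rw [this, ← intervalIntegral.integral_sub hIx hIy]
        congr 1
        have hsub : (∫ s in (0:ℝ)..t, (((t - s) ^ (q-1)) • f (x s) - ((t - s) ^ (q-1)) • f (y s)))
            = ∫ s in (0:ℝ)..t, ((t - s) ^ (q-1)) • (f (x s) - f (y s)) := by
          congr 1; ext s; rw [smul_sub]
        rw [hsub]
        have hInt : IntervalIntegrable
            (fun s => ((t - s) ^ (q-1)) • (f (x s) - f (y s))) volume 0 t := by
          have : (fun s => ((t - s) ^ (q-1)) • (f (x s) - f (y s)))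
              = fun s => ((t - s) ^ (q-1)) • f (x s) - ((t - s) ^ (q-1)) • f (y s) := by
            ext s; rw [smul_sub]
          rw [this]; exact hIx.sub hIy
        have hInt0a := hInt.mono_set
          (by rw [uIcc_of_le ha0, uIcc_of_le ht0]; exact Icc_subset_Icc le_rfl hat)
        have hIntat := hInt.mono_set
          (by rw [uIcc_of_le hat, uIcc_of_le ht0]; exact Icc_subset_Icc ha0 le_rfl)
        rw [← intervalIntegral.integral_add_adjacent_intervals hInt0a hIntat]
        have hzero : (∫ s in (0:ℝ)..a, ((t - s) ^ (q-1)) • (f (x s) - f (y s))) = 0 := by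
          have : EqOn (fun s => ((t - s) ^ (q-1)) • (f (x s) - f (y s)))
              (fun _ => (0 : EuclideanSpace ℝ (Fin n))) (uIcc 0 a) := by
            intro s hs
            rw [uIcc_of_le ha0] at hs
            simp only
            rw [heq s hs, sub_self, smul_zero]
          rw [intervalIntegral.integral_congr this, intervalIntegral.integral_zero]
        rw [hzero, zero_add]
      -- bound the norm
      have hbound : ∀ s ∈ uIoc a t, ‖((t - s) ^ (q-1)) • (f (x s) - f (y s))‖
          ≤ ((t - s) ^ (q-1)) * ((L:ℝ) * M) := by
        intro s hs
        rw [uIoc_of_le hat] at hs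
        have hts : 0 ≤ t - s := by linarith [hs.2]
        have hk0 : 0 ≤ (t - s) ^ (q-1) := Real.rpow_nonneg hts _
        rw [norm_smul, Real.norm_eq_abs, abs_of_nonneg hk0]
        apply mul_le_mul_of_nonneg_left _ hk0
        calc ‖f (x s) - f (y s)‖ ≤ (L:ℝ) * ‖x s - y s‖ := by
              have := hf.dist_le_mul (x s) (y s)
              rwa [dist_eq_norm, dist_eq_norm] at this
          _ ≤ (L:ℝ) * M := by
              apply mul_le_mul_of_nonneg_left _ L.coe_nonneg
              exact hmax ⟨hs.1.le, le_trans hs.2 htb⟩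
      have hKLM : IntervalIntegrable (fun s => ((t - s) ^ (q-1)) * ((L:ℝ) * M)) volume a t :=
        hKat.mul_const _
      have hnorm : ‖∫ s in a..t, ((t - s) ^ (q-1)) • (f (x s) - f (y s))‖
          ≤ |∫ s in a..t, ((t - s) ^ (q-1)) * ((L:ℝ) * M)| := by
        refine le_trans (intervalIntegral.norm_integral_le_of_norm_le hat ?_ hKLM) (le_abs_self _)
        filter_upwards with s hs
        exact hbound s (by rwa [uIoc_of_le hat])
      -- compute the kernel integral
      have hker : (∫ s in a..t, ((t - s) ^ (q-1))) = (t - a) ^ q / q := by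
        have h1 : (∫ s in a..t, ((t - s) ^ (q-1)))
            = ∫ u in (t - t)..(t - a), u ^ (q-1) :=
          intervalIntegral.integral_comp_sub_left (fun u => u ^ (q-1)) t
        rw [h1, sub_self, integral_rpow (Or.inl hqm1)]
        rw [Real.zero_rpow (by linarith : q - 1 + 1 ≠ 0)]
        ring_nf
      have hcalc : (∫ s in a..t, ((t - s) ^ (q-1)) * ((L:ℝ) * M))
          = (t - a) ^ q / q * ((L:ℝ) * M) := by
        rw [intervalIntegral.integral_mul_const, hker]
      have hta : 0 ≤ t - a := by linarith
      have htaq : (t - a) ^ q ≤ δ ^ q :=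
        Real.rpow_le_rpow hta (by linarith) hq0.le
      have hIpos : (0:ℝ) ≤ (t - a) ^ q / q * ((L:ℝ) * M) := by positivity
      calc ‖x t - y t‖ = (1/Γ) * ‖∫ s in a..t, ((t - s) ^ (q-1)) • (f (x s) - f (y s))‖ := by
            rw [hdiff, norm_smul, Real.norm_eq_abs, abs_of_pos (by positivity)]
        _ ≤ (1/Γ) * ((t - a) ^ q / q * ((L:ℝ) * M)) := by
            apply mul_le_mul_of_nonneg_left _ (by positivity)
            calc ‖∫ s in a..t, ((t - s) ^ (q-1)) • (f (x s) - f (y s))‖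
                ≤ |∫ s in a..t, ((t - s) ^ (q-1)) * ((L:ℝ) * M)| := hnorm
              _ = (t - a) ^ q / q * ((L:ℝ) * M) := by rw [hcalc, abs_of_nonneg hIpos]
        _ ≤ (1/Γ) * (δ ^ q / q * ((L:ℝ) * M)) := by
            apply mul_le_mul_of_nonneg_left _ (by positivity)
            apply mul_le_mul_of_nonneg_right _ (by positivity)
            exact (div_le_div_iff_of_pos_right hq0).mpr htaq
        _ ≤ M / 2 := by
            have h1 : (1/Γ) * (δ ^ q / q * ((L:ℝ) * M)) = ((L:ℝ) * δ ^ q) * M / (Γ * q) := by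
              field_simp
            rw [h1, div_le_iff₀ (by positivity)]
            nlinarith [mul_le_mul_of_nonneg_right hLδ hM0, mul_pos hΓ hq0]
    -- conclude M = 0
    have hM : M ≤ M / 2 := key t₀ ht₀
    have hMz : M = 0 := by linarith
    rintro t ⟨ht0, htb⟩
    rcases le_total t a with h | h
    · exact heq t ⟨ht0, h⟩
    · have : ‖x t - y t‖ ≤ M / 2 := key t ⟨h, htb⟩
      have : ‖x t - y t‖ = 0 := le_antisymm (by linarith [hMz ▸ this]) (norm_nonneg _)
      rwa [norm_sub_eq_zero_iff] at this
  -- induction over steps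
  have main : ∀ k : ℕ, ∀ t ∈ Icc (0:ℝ) (min T (k * δ)), x t = y t := by
    intro k
    induction k with
    | zero =>
        rintro t ⟨ht0, ht1⟩
        have : t ≤ 0 := le_trans ht1 (by simp)
        have ht : t = 0 := le_antisymm this ht0
        rw [ht]; exact hx0
    | succ k ih =>
        set a := min T (k * δ) with hadef
        have haIcc : a ∈ Icc (0:ℝ) T := ⟨le_min hT.le (by positivity), min_le_left _ _⟩
        have h2 := step a haIcc (fun s hs => ih s hs)
        intro t ht
        apply h2
        rcases ht with ⟨ht0, ht1⟩
        refine ⟨ht0, le_trans ht1 ?_⟩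
        rcases le_total ((k:ℝ) * δ) T with h | h
        · rw [hadef, min_eq_right h]
          apply min_le_min le_rfl
          push_cast; linarith
        · rw [hadef, min_eq_left h]
          have : min T ((k+1:ℕ) * δ) ≤ T := min_le_left _ _
          exact le_trans this (le_min le_rfl (by linarith))
  rintro t ⟨ht0, htT⟩
  obtain ⟨k, hk⟩ := exists_nat_ge (T / δ)
  have hkδ : T ≤ k * δ := by
    rw [div_le_iff₀ hδ] at hk; linarith
  exact main k t ⟨ht0, le_min htT (le_trans htT hkδ)⟩
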